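/- Let k be a field and let Z be a zero-dimensional closed subscheme of Pⁿ_k with d := dim_k Γ(Z, O_Z) ≤ n. Then Z is contained in a linear subvariety of Pⁿ_k of dimension d − 1. -/

import Mathlib

/-- A zero-dimensional closed subscheme `Z ⊂ Pⁿ_k` with `d := dim_k Γ(Z, O_Z) ≤ n`
lies on a linear subvariety of dimension `d − 1`.

Encoding: `Z = Spec R` for a finite `k`-algebra `R` with `dim_k R = d`; the embedding
of `Z` into `Pⁿ_k` (with `O(1)|_Z` trivialised, as `Pic R = 0` for `R` artinian) is the
datum of homogeneous coordinates `a : Fin (n+1) → R` generating the unit ideal.  A linear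
subvariety of dimension `d − 1` containing `Z` is the common zero locus of a space `W`
of linear forms of dimension `≥ n + 1 − d`, each vanishing on `Z`. -/
theorem stmt_7 {k : Type*} [Field k] (n d : ℕ) (hdn : d ≤ n)
    (R : Type*) [CommRing R] [Algebra k R] [Module.Finite k R]
    (hd : Module.finrank k R = d)
    (a : Fin (n + 1) → R) (ha : Ideal.span (Set.range a) = ⊤) :
    ∃ W : Submodule k (Fin (n + 1) → k),
      n + 1 - d ≤ Module.finrank k W ∧
      ∀ φ ∈ W, (∑ i, φ i • a i) = (0 : R) := by
  let f : (Fin (n + 1) → k) →ₗ[k] R := Fintype.linearCombination k a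
  refine ⟨LinearMap.ker f, ?_, ?_⟩
  · have h1 := LinearMap.finrank_range_add_finrank_ker f
    have h2 : Module.finrank k (LinearMap.range f) ≤ d := by
      rw [← hd]; exact Submodule.finrank_le _
    have h3 : Module.finrank k (Fin (n + 1) → k) = n + 1 := by simp
    omega
  · intro φ hφ
    simpa [f, Fintype.linearCombination_apply] using hφ
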